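/- Let G be a minimal nonperfectly divisible fork-free graph, v ∈ V(G), and C = v_1v_2…v_nv_1 an odd hole contained in G[M(v)] (n ≥ 5 odd, indices modulo n). Then for every z ∈ Z(C) that has a neighbor in U(C), there exist indices i, j ∈ {1, 2, …, n} such that N(z) ∩ U(C) ⊆ U_i(C) ∪ U_j(C). -/

import Mathlib

open SimpleGraph

/-- `G` contains an induced copy of `H`. -/
def HasInducedCopy {V W : Type*} (G : SimpleGraph V) (H : SimpleGraph W) : Prop :=
  ∃ f : W ↪ V, ∀ a b : W, G.Adj (f a) (f b) ↔ H.Adj a b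

/-- The fork: the claw `K_{1,3}` with one edge subdivided once. -/
def fork : SimpleGraph (Fin 5) :=
  SimpleGraph.fromEdgeSet {s(0, 1), s(0, 2), s(0, 3), s(3, 4)}

/-- The claw `K_{1,3}`. -/
def claw : SimpleGraph (Fin 4) :=
  SimpleGraph.fromEdgeSet {s(0, 1), s(0, 2), s(0, 3)}

/-- The path on 7 vertices. -/
def P7 : SimpleGraph (Fin 7) := SimpleGraph.pathGraph 7

/-- The disjoint union of a path on 6 vertices and a single vertex. -/
def P6K1 : SimpleGraph (Fin 7) :=
  SimpleGraph.fromEdgeSet {s(0, 1), s(1, 2), s(2, 3), s(3, 4), s(4, 5)}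

/-- A graph is perfect if every induced subgraph has chromatic number
equal to clique number. -/
def IsPerfect {V : Type*} (G : SimpleGraph V) : Prop :=
  ∀ s : Set V, (G.induce s).chromaticNumber = ((G.induce s).cliqueNum : ℕ∞)

/-- A graph is perfectly divisible if the vertex set of every (nonempty) induced
subgraph `H` can be partitioned into `A` and `B` with `H[A]` perfect and
`ω(H[B]) < ω(H)`. -/
def PerfectlyDivisible {V : Type*} (G : SimpleGraph V) : Prop :=
  ∀ s : Set V, s.Nonempty → ∃ A B : Set V, A ∪ B = s ∧ A ∩ B = ∅ ∧
    IsPerfect (G.induce A) ∧ (G.induce B).cliqueNum < (G.induce s).cliqueNum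

/-- A graph is minimal nonperfectly divisible if it is not perfectly divisible but
every proper induced subgraph is perfectly divisible. -/
def MinimalNPD {V : Type*} (G : SimpleGraph V) : Prop :=
  ¬ PerfectlyDivisible G ∧ ∀ s : Set V, s ≠ Set.univ → PerfectlyDivisible (G.induce s)

/-- The open neighborhood of a set `S`: all vertices outside `S` with a neighbor in `S`. -/
def NSet {V : Type*} (G : SimpleGraph V) (S : Set V) : Set V :=
  {v | v ∉ S ∧ ∃ x ∈ S, G.Adj x v}

/-- `M(S)`: the vertices outside `S ∪ N(S)`. -/
def MSet {V : Type*} (G : SimpleGraph V) (S : Set V) : Set V :=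
  {v | v ∉ S ∧ v ∉ NSet G S}

/-- `M(v)`: the set of vertices distinct from `v` and nonadjacent to `v`. -/
def Mv {V : Type*} (G : SimpleGraph V) (v : V) : Set V :=
  {u | u ≠ v ∧ ¬ G.Adj v u}

/-- `f : ZMod n → V` describes a hole (an induced cycle of length at least 4) of `G`. -/
def IsHole {V : Type*} (G : SimpleGraph V) (n : ℕ) (f : ZMod n → V) : Prop :=
  4 ≤ n ∧ Function.Injective f ∧
    ∀ i j : ZMod n, G.Adj (f i) (f j) ↔ (j = i + 1 ∨ i = j + 1)

/-- `U(C)`: the balloon centers of the hole `C` given by `f`. -/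
def USet {V : Type*} (G : SimpleGraph V) (n : ℕ) (f : ZMod n → V) : Set V :=
  {u | u ∈ NSet G (MSet G (Set.range f)) ∧
    ∃ i : ZMod n, G.neighborSet u ∩ Set.range f = {f i, f (i + 1)}}

/-- `U_i(C)`: the balloon centers of `C` attached at `v_i v_{i+1}`. -/
def UiSet {V : Type*} (G : SimpleGraph V) (n : ℕ) (f : ZMod n → V) (i : ZMod n) : Set V :=
  {u | u ∈ NSet G (MSet G (Set.range f)) ∧
    G.neighborSet u ∩ Set.range f = {f i, f (i + 1)}}

/-- `U'(C)`: the parachute centers of `C`. -/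
def U'Set {V : Type*} (G : SimpleGraph V) (n : ℕ) (f : ZMod n → V) : Set V :=
  {u | u ∈ NSet G (MSet G (Set.range f)) ∧ ∀ i : ZMod n, G.Adj u (f i)}

/-- `Z(C)`: vertices of `N(V(C)) \ N(M(C))` not complete to `V(C)`. -/
def ZSet {V : Type*} (G : SimpleGraph V) (n : ℕ) (f : ZMod n → V) : Set V :=
  {z | z ∈ NSet G (Set.range f) ∧ z ∉ NSet G (MSet G (Set.range f)) ∧
    ¬ ∀ i : ZMod n, G.Adj z (f i)}

/-- `Z'(C) = N(V(C)) \ (N(M(C)) ∪ Z(C))`. -/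
def Z'Set {V : Type*} (G : SimpleGraph V) (n : ℕ) (f : ZMod n → V) : Set V :=
  NSet G (Set.range f) \ (NSet G (MSet G (Set.range f)) ∪ ZSet G n f)

/-- `Y(C) = N_{M(C)}(U(C))`. -/
def YSet {V : Type*} (G : SimpleGraph V) (n : ℕ) (f : ZMod n → V) : Set V :=
  {y | y ∈ MSet G (Set.range f) ∧ ∃ u ∈ USet G n f, G.Adj u y}

/-- `x` and `y` lie in a common connected component of `G[S]`. -/
def SameComp {V : Type*} (G : SimpleGraph V) (S : Set V) (x y : V) : Prop :=
  ∃ (hx : x ∈ S) (hy : y ∈ S), (G.induce S).Reachable ⟨x, hx⟩ ⟨y, hy⟩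

/-- `Y'(C)`: the union of the components of `G[M(C)]` meeting `Y(C)`. -/
def Y'Set {V : Type*} (G : SimpleGraph V) (n : ℕ) (f : ZMod n → V) : Set V :=
  {x | ∃ y ∈ YSet G n f, SameComp G (MSet G (Set.range f)) x y}

lemma fork_adj_iff (x y : Fin 5) : fork.Adj x y ↔
    (x = 0 ∧ y = 1) ∨ (x = 1 ∧ y = 0) ∨ (x = 0 ∧ y = 2) ∨ (x = 2 ∧ y = 0) ∨
    (x = 0 ∧ y = 3) ∨ (x = 3 ∧ y = 0) ∨ (x = 3 ∧ y = 4) ∨ (x = 4 ∧ y = 3) := by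
  simp only [fork, SimpleGraph.fromEdgeSet_adj, Set.mem_insert_iff, Set.mem_singleton_iff,
    Sym2.eq_iff]
  constructor
  · rintro ⟨h, hne⟩; tauto
  · intro h
    refine ⟨by tauto, ?_⟩
    rcases h with ⟨rfl,rfl⟩|⟨rfl,rfl⟩|⟨rfl,rfl⟩|⟨rfl,rfl⟩|⟨rfl,rfl⟩|⟨rfl,rfl⟩|⟨rfl,rfl⟩|⟨rfl,rfl⟩ <;>
      decide

lemma mk_fork {V : Type*} {G : SimpleGraph V} (hfork : ¬ HasInducedCopy G fork)
    {a b c d e : V} (hab : G.Adj a b) (hac : G.Adj a c) (had : G.Adj a d) (hde : G.Adj d e)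
    (hbc : ¬ G.Adj b c) (hbd : ¬ G.Adj b d) (hcd : ¬ G.Adj c d)
    (hae : ¬ G.Adj a e) (hbe : ¬ G.Adj b e) (hce : ¬ G.Adj c e)
    (nbc : b ≠ c) (nbd : b ≠ d) (ncd : c ≠ d) (nae : a ≠ e) (nbe : b ≠ e) (nce : c ≠ e) :
    False := by
  apply hfork
  have nab : a ≠ b := hab.ne
  have nac : a ≠ c := hac.ne
  have nad : a ≠ d := had.ne
  have nde : d ≠ e := hde.ne
  have hcb : ¬ G.Adj c b := fun h => hbc (G.adj_symm h)
  have hdb : ¬ G.Adj d b := fun h => hbd (G.adj_symm h)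
  have hdc : ¬ G.Adj d c := fun h => hcd (G.adj_symm h)
  have hea : ¬ G.Adj e a := fun h => hae (G.adj_symm h)
  have heb : ¬ G.Adj e b := fun h => hbe (G.adj_symm h)
  have hec : ¬ G.Adj e c := fun h => hce (G.adj_symm h)
  have hba := hab.symm
  have hca := hac.symm
  have hda := had.symm
  have hed := hde.symm
  have hinj : Function.Injective ![a,b,c,d,e] := by
    intro x y hxy
    fin_cases x <;> fin_cases y <;>
      simp only [Matrix.cons_val_zero, Matrix.cons_val_one, Matrix.head_cons,
        Matrix.cons_val_two, Matrix.tail_cons, Matrix.cons_val_three, Matrix.cons_val_four,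
        Matrix.head_fin_const] at hxy <;>
      first
        | rfl
        | (exfalso; first
            | exact nab hxy | exact nac hxy | exact nad hxy | exact nae hxy
            | exact nbc hxy | exact nbd hxy | exact nbe hxy | exact ncd hxy
            | exact nce hxy | exact nde hxy
            | exact nab hxy.symm | exact nac hxy.symm | exact nad hxy.symm | exact nae hxy.symm
            | exact nbc hxy.symm | exact nbd hxy.symm | exact nbe hxy.symm | exact ncd hxy.symm
            | exact nce hxy.symm | exact nde hxy.symm)
  refine ⟨⟨![a,b,c,d,e], hinj⟩, ?_⟩
  intro x y
  fin_cases x <;> fin_cases y <;>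
    rw [fork_adj_iff] <;>
    simp only [Matrix.cons_val_zero, Matrix.cons_val_one, Matrix.head_cons,
      Matrix.cons_val_two, Matrix.tail_cons, Matrix.cons_val_three, Matrix.cons_val_four,
      Matrix.head_fin_const] <;>
    first
      | (refine iff_of_true ?_ (by decide); assumption)
      | (refine iff_of_false ?_ (by decide); first | assumption | exact G.irrefl)

theorem stmt12 {V : Type*} [Fintype V] (G : SimpleGraph V)
    (hfork : ¬ HasInducedCopy G fork) (hmin : MinimalNPD G)
    (v : V) (n : ℕ) (f : ZMod n → V) (hC : IsHole G n f) (hodd : Odd n)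
    (hn : 5 ≤ n) (hMv : Set.range f ⊆ Mv G v) :
    ∀ z ∈ ZSet G n f, (∃ u ∈ USet G n f, G.Adj z u) →
      ∃ i j : ZMod n, ∀ u ∈ USet G n f, G.Adj z u →
        u ∈ UiSet G n f i ∪ UiSet G n f j := by
  clear hmin hodd hMv v
  obtain ⟨h4n, hinj, hadj⟩ := hC
  haveI : NeZero n := ⟨by omega⟩
  intro z hz hex
  obtain ⟨hzNr, hzNM, hznc⟩ := hz
  have hz4 : ∀ d : ℕ, 0 < d → d < 5 → ((d : ZMod n) : ZMod n) ≠ 0 := by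
    intro d hd1 hd2 h
    have hdvd : n ∣ d := (ZMod.natCast_eq_zero_iff d n).mp h
    have := Nat.le_of_dvd hd1 hdvd
    omega
  have e1 : (1 : ZMod n) ≠ 0 := by simpa using hz4 1 (by norm_num) (by norm_num)
  have e2 : (2 : ZMod n) ≠ 0 := by simpa using hz4 2 (by norm_num) (by norm_num)
  have e3 : (3 : ZMod n) ≠ 0 := by simpa using hz4 3 (by norm_num) (by norm_num)
  have e4 : (4 : ZMod n) ≠ 0 := by simpa using hz4 4 (by norm_num) (by norm_num)
  have hfadjL : ∀ a b : ZMod n, b = a + 1 → G.Adj (f a) (f b) :=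
    fun a b h => (hadj a b).mpr (Or.inl h)
  have hfadjR : ∀ a b : ZMod n, a = b + 1 → G.Adj (f a) (f b) :=
    fun a b h => (hadj a b).mpr (Or.inr h)
  have hfnadj : ∀ a b : ZMod n, b ≠ a + 1 → a ≠ b + 1 → ¬ G.Adj (f a) (f b) := by
    intro a b hb ha h
    rcases (hadj a b).mp h with h' | h'
    · exact hb h'
    · exact ha h'
  have hfne : ∀ a b : ZMod n, a ≠ b → f a ≠ f b := fun a b h hh => h (hinj hh)
  have hzr : z ∉ Set.range f := hzNr.1
  have hzMnot : z ∉ MSet G (Set.range f) := fun h => h.2 hzNr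
  have hzfne : ∀ a : ZMod n, z ≠ f a := fun a h => hzr ⟨a, h.symm⟩
  have getU : ∀ u, u ∈ USet G n f → ∃ (i : ZMod n) (y : V),
      u ∈ UiSet G n f i ∧
      G.Adj u (f i) ∧ G.Adj u (f (i + 1)) ∧
      (∀ c, G.Adj u (f c) → c = i ∨ c = i + 1) ∧
      G.Adj u y ∧ (∀ a, ¬ G.Adj y (f a)) ∧ ¬ G.Adj y z ∧
      u ∉ Set.range f ∧ y ∉ Set.range f ∧ y ≠ z := by
    intro u hu
    obtain ⟨hN, i, hEq⟩ := hu
    obtain ⟨huM, y, hyM, hyu⟩ := hN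
    have hyr : y ∉ Set.range f := hyM.1
    have hyC : ∀ a, ¬ G.Adj y (f a) := fun a h => hyM.2 ⟨hyr, f a, ⟨a, rfl⟩, h.symm⟩
    have hur : u ∉ Set.range f := by
      rintro ⟨a, rfl⟩
      exact hyC a hyu
    have hufi : G.Adj u (f i) := by
      have h1 : f i ∈ G.neighborSet u ∩ Set.range f := by
        rw [hEq]; exact Set.mem_insert _ _
      exact h1.1
    have hufi1 : G.Adj u (f (i + 1)) := by
      have h1 : f (i + 1) ∈ G.neighborSet u ∩ Set.range f := by
        rw [hEq]; exact Set.mem_insert_iff.mpr (Or.inr rfl)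
      exact h1.1
    have huC : ∀ c, G.Adj u (f c) → c = i ∨ c = i + 1 := by
      intro c h
      have h1 : f c ∈ G.neighborSet u ∩ Set.range f := ⟨h, ⟨c, rfl⟩⟩
      rw [hEq] at h1
      rcases h1 with h1 | h1
      · exact Or.inl (hinj h1)
      · exact Or.inr (hinj h1)
    have hyz : ¬ G.Adj y z := fun h => hzNM ⟨hzMnot, y, hyM, h⟩
    have hyzne : y ≠ z := fun h => hzMnot (h ▸ hyM)
    exact ⟨i, y, ⟨⟨huM, y, hyM, hyu⟩, hEq⟩, hufi, hufi1, huC, hyu.symm, hyC, hyz, hur, hyr,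
      hyzne⟩
  have K1 : ∀ (u : V) (i : ZMod n) (y : V), G.Adj z u →
      (∀ c, G.Adj u (f c) → c = i ∨ c = i + 1) →
      G.Adj u y → (∀ a, ¬ G.Adj y (f a)) → ¬ G.Adj y z →
      u ∉ Set.range f → y ∉ Set.range f → y ≠ z →
      ∀ a b : ZMod n, G.Adj z (f a) → G.Adj z (f b) →
        a ≠ i → a ≠ i + 1 → b ≠ i → b ≠ i + 1 →
        a ≠ b → b ≠ a + 1 → a ≠ b + 1 → False := by
    intro u i y hzu huC huy hyC hyz hur hyr hyzne a b hWa hWb hai hai1 hbi hbi1 hab hba1 hab1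
    exact mk_fork hfork hWa hWb hzu huy
      (hfnadj a b hba1 hab1)
      (fun h => (huC a h.symm).elim hai hai1)
      (fun h => (huC b h.symm).elim hbi hbi1)
      (fun h => hyz h.symm)
      (fun h => hyC a h.symm)
      (fun h => hyC b h.symm)
      (hfne a b hab)
      (fun h => hur ⟨a, h⟩)
      (fun h => hur ⟨b, h⟩)
      (fun h => hyzne h.symm)
      (fun h => hyr ⟨a, h⟩)
      (fun h => hyr ⟨b, h⟩)
  have K2 : ∀ (u : V) (i : ZMod n) (y : V), G.Adj z u →
      G.Adj u (f (i + 1)) → (∀ c, G.Adj u (f c) → c = i ∨ c = i + 1) →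
      G.Adj u y → (∀ a, ¬ G.Adj y (f a)) → ¬ G.Adj y z →
      u ∉ Set.range f → y ∉ Set.range f → y ≠ z →
      ¬ G.Adj z (f (i + 1)) →
      ∀ c, G.Adj z (f c) → c = i ∨ c = i + 1 ∨ c = i + 2 := by
    intro u i y hzu hufi1 huC huy hyC hyz hur hyr hyzne hW1 c hWc
    by_contra hcon
    push_neg at hcon
    obtain ⟨hc0, hc1, hc2⟩ := hcon
    exact mk_fork hfork huy hufi1 hzu.symm hWc
      (hyC (i + 1))
      hyz
      (fun h => hW1 h.symm)
      (fun h => (huC c h).elim hc0 hc1)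
      (hyC c)
      (hfnadj (i + 1) c (fun h => hc2 (by linear_combination h))
        (fun h => hc0 (by linear_combination -h)))
      (fun h => hyr ⟨i + 1, h.symm⟩)
      hyzne
      (fun h => hzr ⟨i + 1, h⟩)
      (fun h => hur ⟨c, h.symm⟩)
      (fun h => hyr ⟨c, h.symm⟩)
      (hfne (i + 1) c (fun h => hc1 h.symm))
  have K2' : ∀ (u : V) (i : ZMod n) (y : V), G.Adj z u →
      G.Adj u (f i) → (∀ c, G.Adj u (f c) → c = i ∨ c = i + 1) →
      G.Adj u y → (∀ a, ¬ G.Adj y (f a)) → ¬ G.Adj y z →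
      u ∉ Set.range f → y ∉ Set.range f → y ≠ z →
      ¬ G.Adj z (f i) →
      ∀ c, G.Adj z (f c) → c + 1 = i ∨ c = i ∨ c = i + 1 := by
    intro u i y hzu hufi huC huy hyC hyz hur hyr hyzne hW0 c hWc
    by_contra hcon
    push_neg at hcon
    obtain ⟨hcm, hc0, hc1⟩ := hcon
    exact mk_fork hfork huy hufi hzu.symm hWc
      (hyC i)
      hyz
      (fun h => hW0 h.symm)
      (fun h => (huC c h).elim hc0 hc1)
      (hyC c)
      (hfnadj i c hc1 (fun h => hcm h.symm))
      (fun h => hyr ⟨i, h.symm⟩)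
      hyzne
      (fun h => hzr ⟨i, h⟩)
      (fun h => hur ⟨c, h.symm⟩)
      (fun h => hyr ⟨c, h.symm⟩)
      (hfne i c (fun h => hc0 h.symm))
  have F1 : ∀ (u : V) (i : ZMod n) (y : V), G.Adj z u →
      G.Adj u (f (i + 1)) → (∀ c, G.Adj u (f c) → c = i ∨ c = i + 1) →
      G.Adj u y → (∀ a, ¬ G.Adj y (f a)) → ¬ G.Adj y z →
      u ∉ Set.range f → y ∉ Set.range f → y ≠ z →
      ¬ G.Adj z (f (i + 1)) → G.Adj z (f (i + 2)) := by
    intro u i y hzu hufi1 huC huy hyC hyz hur hyr hyzne hW1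
    by_contra hW2
    exact mk_fork hfork huy hzu.symm hufi1 (hfadjL (i + 1) (i + 2) (by ring))
      hyz
      (hyC (i + 1))
      hW1
      (fun h => (huC (i + 2) h).elim (fun h' => e2 (by linear_combination h'))
        (fun h' => e1 (by linear_combination h')))
      (hyC (i + 2))
      hW2
      hyzne
      (fun h => hyr ⟨i + 1, h.symm⟩)
      (hzfne (i + 1))
      (fun h => hur ⟨i + 2, h.symm⟩)
      (fun h => hyr ⟨i + 2, h.symm⟩)
      (hzfne (i + 2))
  have F1' : ∀ (u : V) (i : ZMod n) (y : V), G.Adj z u →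
      G.Adj u (f i) → (∀ c, G.Adj u (f c) → c = i ∨ c = i + 1) →
      G.Adj u y → (∀ a, ¬ G.Adj y (f a)) → ¬ G.Adj y z →
      u ∉ Set.range f → y ∉ Set.range f → y ≠ z →
      ¬ G.Adj z (f i) → G.Adj z (f (i - 1)) := by
    intro u i y hzu hufi huC huy hyC hyz hur hyr hyzne hW0
    by_contra hWm
    exact mk_fork hfork huy hzu.symm hufi (hfadjR i (i - 1) (by ring))
      hyz
      (hyC i)
      hW0
      (fun h => (huC (i - 1) h).elim (fun h' => e1 (by linear_combination -h'))
        (fun h' => e2 (by linear_combination -h')))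
      (hyC (i - 1))
      hWm
      hyzne
      (fun h => hyr ⟨i, h.symm⟩)
      (hzfne i)
      (fun h => hur ⟨i - 1, h.symm⟩)
      (fun h => hyr ⟨i - 1, h.symm⟩)
      (hzfne (i - 1))
  have S1 : ∀ (u : V) (i : ZMod n) (y : V), G.Adj z u →
      G.Adj u (f i) → G.Adj u (f (i + 1)) → (∀ c, G.Adj u (f c) → c = i ∨ c = i + 1) →
      G.Adj u y → (∀ a, ¬ G.Adj y (f a)) → ¬ G.Adj y z →
      u ∉ Set.range f → y ∉ Set.range f → y ≠ z →
      G.Adj z (f i) ∧ G.Adj z (f (i + 1)) := by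
    intro u i y hzu hufi hufi1 huC huy hyC hyz hur hyr hyzne
    by_cases hW1 : G.Adj z (f (i + 1))
    · by_cases hW0 : G.Adj z (f i)
      · exact ⟨hW0, hW1⟩
      · exfalso
        have hWm1 : G.Adj z (f (i - 1)) :=
          F1' u i y hzu hufi huC huy hyC hyz hur hyr hyzne hW0
        have hK := K2' u i y hzu hufi huC huy hyC hyz hur hyr hyzne hW0
        have hWm2 : ¬ G.Adj z (f (i - 2)) := by
          intro h
          rcases hK _ h with h' | h' | h'
          · exact e1 (by linear_combination -h')
          · exact e2 (by linear_combination -h')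
          · exact e3 (by linear_combination -h')
        have hWm3 : ¬ G.Adj z (f (i - 3)) := by
          intro h
          rcases hK _ h with h' | h' | h'
          · exact e2 (by linear_combination -h')
          · exact e3 (by linear_combination -h')
          · exact e4 (by linear_combination -h')
        exact mk_fork hfork hWm1.symm (hfadjL (i - 1) i (by ring))
          (hfadjR (i - 1) (i - 2) (by ring)) (hfadjR (i - 2) (i - 3) (by ring))
          hW0
          hWm2
          (hfnadj i (i - 2) (fun h => e3 (by linear_combination -h))
            (fun h => e1 (by linear_combination h)))
          (hfnadj (i - 1) (i - 3) (fun h => e3 (by linear_combination -h))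
            (fun h => e1 (by linear_combination h)))
          hWm3
          (hfnadj i (i - 3) (fun h => e4 (by linear_combination -h))
            (fun h => e2 (by linear_combination h)))
          (hzfne i)
          (hzfne (i - 2))
          (hfne i (i - 2) (fun h => e2 (by linear_combination h)))
          (hfne (i - 1) (i - 3) (fun h => e2 (by linear_combination h)))
          (hzfne (i - 3))
          (hfne i (i - 3) (fun h => e3 (by linear_combination h)))
    · exfalso
      have hW2 : G.Adj z (f (i + 2)) :=
        F1 u i y hzu hufi1 huC huy hyC hyz hur hyr hyzne hW1
      by_cases hW0 : G.Adj z (f i)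
      · have hK := K2 u i y hzu hufi1 huC huy hyC hyz hur hyr hyzne hW1
        have hW3 : ¬ G.Adj z (f (i + 3)) := by
          intro h
          rcases hK _ h with h' | h' | h'
          · exact e3 (by linear_combination h')
          · exact e2 (by linear_combination h')
          · exact e1 (by linear_combination h')
        have hW4 : ¬ G.Adj z (f (i + 4)) := by
          intro h
          rcases hK _ h with h' | h' | h'
          · exact e4 (by linear_combination h')
          · exact e3 (by linear_combination h')
          · exact e2 (by linear_combination h')
        exact mk_fork hfork hW2.symm (hfadjR (i + 2) (i + 1) (by ring))
          (hfadjL (i + 2) (i + 3) (by ring)) (hfadjL (i + 3) (i + 4) (by ring))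
          hW1
          hW3
          (hfnadj (i + 1) (i + 3) (fun h => e1 (by linear_combination h))
            (fun h => e3 (by linear_combination -h)))
          (hfnadj (i + 2) (i + 4) (fun h => e1 (by linear_combination h))
            (fun h => e3 (by linear_combination -h)))
          hW4
          (hfnadj (i + 1) (i + 4) (fun h => e2 (by linear_combination h))
            (fun h => e4 (by linear_combination -h)))
          (hzfne (i + 1))
          (hzfne (i + 3))
          (hfne (i + 1) (i + 3) (fun h => e2 (by linear_combination -h)))
          (hfne (i + 2) (i + 4) (fun h => e2 (by linear_combination -h)))
          (hzfne (i + 4))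
          (hfne (i + 1) (i + 4) (fun h => e3 (by linear_combination -h)))
      · have hK' := K2' u i y hzu hufi huC huy hyC hyz hur hyr hyzne hW0
        rcases hK' (i + 2) hW2 with h' | h' | h'
        · exact e3 (by linear_combination h')
        · exact e2 (by linear_combination h')
        · exact e1 (by linear_combination h')
  have S2A : ∀ (u : V) (i : ZMod n) (y : V) (u' : V) (y' : V), G.Adj z u →
      G.Adj u (f i) → G.Adj u (f (i + 1)) → (∀ c, G.Adj u (f c) → c = i ∨ c = i + 1) →
      G.Adj u y → (∀ a, ¬ G.Adj y (f a)) → ¬ G.Adj y z →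
      u ∉ Set.range f → y ∉ Set.range f → y ≠ z →
      G.Adj z u' →
      G.Adj u' (f (i + 1)) → G.Adj u' (f (i + 1 + 1)) →
      (∀ c, G.Adj u' (f c) → c = i + 1 ∨ c = i + 1 + 1) →
      G.Adj u' y' → (∀ a, ¬ G.Adj y' (f a)) → ¬ G.Adj y' z →
      u' ∉ Set.range f → y' ∉ Set.range f → y' ≠ z →
      ∀ c, G.Adj z (f c) → c ≠ i → c ≠ i + 1 → c ≠ i + 1 + 1 → False := by
    intro u i y u' y' hzu hufi hufi1 huC huy hyC hyz hur hyr hyzne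
      hzu' hufi' hufi1' huC' huy' hyC' hyz' hur' hyr' hyzne' c hWc hci hci1 hci2
    have hWi := S1 u i y hzu hufi hufi1 huC huy hyC hyz hur hyr hyzne
    have hWj := S1 u' (i + 1) y' hzu' hufi' hufi1' huC' huy' hyC' hyz' hur' hyr' hyzne'
    have step1 : c = i + 1 + 1 + 1 := by
      by_contra hne3
      exact K1 u i y hzu huC huy hyC hyz hur hyr hyzne c (i + 1 + 1) hWc hWj.2
        hci hci1
        (fun h => e2 (by linear_combination h))
        (fun h => e1 (by linear_combination h))
        hci2
        (fun h => hci1 (by linear_combination -h))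
        hne3
    subst step1
    exact K1 u' (i + 1) y' hzu' huC' huy' hyC' hyz' hur' hyr' hyzne'
      i (i + 1 + 1 + 1) hWi.1 hWc
      (fun h => e1 (by linear_combination -h))
      (fun h => e2 (by linear_combination -h))
      (fun h => e2 (by linear_combination h))
      (fun h => e1 (by linear_combination h))
      (fun h => e3 (by linear_combination -h))
      (fun h => e2 (by linear_combination h))
      (fun h => e4 (by linear_combination -h))
  have S2 : ∀ (u : V) (i : ZMod n) (y : V) (u' : V) (j : ZMod n) (y' : V), G.Adj z u →
      G.Adj u (f i) → G.Adj u (f (i + 1)) → (∀ c, G.Adj u (f c) → c = i ∨ c = i + 1) →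
      G.Adj u y → (∀ a, ¬ G.Adj y (f a)) → ¬ G.Adj y z →
      u ∉ Set.range f → y ∉ Set.range f → y ≠ z →
      G.Adj z u' →
      G.Adj u' (f j) → G.Adj u' (f (j + 1)) → (∀ c, G.Adj u' (f c) → c = j ∨ c = j + 1) →
      G.Adj u' y' → (∀ a, ¬ G.Adj y' (f a)) → ¬ G.Adj y' z →
      u' ∉ Set.range f → y' ∉ Set.range f → y' ≠ z →
      i ≠ j → ∀ c, G.Adj z (f c) → c = i ∨ c = i + 1 ∨ c = j ∨ c = j + 1 := by
    intro u i y u' j y' hzu hufi hufi1 huC huy hyC hyz hur hyr hyzne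
      hzu' hufi' hufi1' huC' huy' hyC' hyz' hur' hyr' hyzne' hij c hWc
    by_contra hcon
    push_neg at hcon
    obtain ⟨hci, hci1, hcj, hcj1⟩ := hcon
    by_cases hji1 : j = i + 1
    · subst hji1
      exact S2A u i y u' y' hzu hufi hufi1 huC huy hyC hyz hur hyr hyzne
        hzu' hufi' hufi1' huC' huy' hyC' hyz' hur' hyr' hyzne' c hWc hci hci1 hcj1
    · by_cases hij1 : i = j + 1
      · subst hij1
        exact S2A u' j y' u y hzu' hufi' hufi1' huC' huy' hyC' hyz' hur' hyr' hyzne'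
          hzu hufi hufi1 huC huy hyC hyz hur hyr hyzne c hWc hcj hcj1 hci1
      · have hWj := S1 u' j y' hzu' hufi' hufi1' huC' huy' hyC' hyz' hur' hyr' hyzne'
        have hd : c = j ∨ c = j + 1 ∨ j = c + 1 := by
          by_contra h
          push_neg at h
          exact K1 u i y hzu huC huy hyC hyz hur hyr hyzne c j hWc hWj.1 hci hci1
            (fun h' => hij h'.symm) hji1 h.1 h.2.2 h.2.1
        rcases hd with h' | h' | h'
        · exact hcj h'
        · exact hcj1 h'
        · exact K1 u i y hzu huC huy hyC hyz hur hyr hyzne c (j + 1) hWc hWj.2 hci hci1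
            (fun h2 => hij1 h2.symm)
            (fun h2 => hij (by linear_combination -h2))
            hcj1
            (fun h2 => hcj (by linear_combination -h2))
            (fun h2 => e3 (by linear_combination -h2 - h'))
  obtain ⟨u₀, hu₀U, hzu₀⟩ := hex
  obtain ⟨i₀, y₀, m₀, a₀, a₀1, c₀, d₀, eC₀, f₀, g₀, h₀, i₀ne⟩ := getU u₀ hu₀U
  by_cases hall : ∀ u ∈ USet G n f, G.Adj z u → u ∈ UiSet G n f i₀
  · exact ⟨i₀, i₀, fun u hu hz' => Set.mem_union_left _ (hall u hu hz')⟩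
  · push_neg at hall
    obtain ⟨u₁, hu₁U, hzu₁, hu₁not⟩ := hall
    obtain ⟨i₁, y₁, m₁, a₁, a₁1, c₁, d₁, eC₁, f₁, g₁, h₁, i₁ne⟩ := getU u₁ hu₁U
    have hne01 : i₀ ≠ i₁ := fun h => hu₁not (h ▸ m₁)
    refine ⟨i₀, i₁, ?_⟩
    intro u₂ hu₂U hzu₂
    obtain ⟨k, y₂, m₂, a₂, a₂1, c₂, d₂, eC₂, f₂, g₂, h₂r, i₂ne⟩ := getU u₂ hu₂U
    by_cases hk0 : k = i₀
    · exact Set.mem_union_left _ (hk0 ▸ m₂)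
    by_cases hk1 : k = i₁
    · exact Set.mem_union_right _ (hk1 ▸ m₂)
    exfalso
    have hWk := S1 u₂ k y₂ hzu₂ a₂ a₂1 c₂ d₂ eC₂ f₂ g₂ h₂r i₂ne
    have hS2 := S2 u₀ i₀ y₀ u₁ i₁ y₁ hzu₀ a₀ a₀1 c₀ d₀ eC₀ f₀ g₀ h₀ i₀ne
      hzu₁ a₁ a₁1 c₁ d₁ eC₁ f₁ g₁ h₁ i₁ne hne01
    rcases hS2 k hWk.1 with h' | h' | h' | h'
    · exact hk0 h'
    · rcases hS2 (k + 1) hWk.2 with h2 | h2 | h2 | h2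
      · exact e2 (by linear_combination h2 - h')
      · exact e1 (by linear_combination h2 - h')
      · have hW11 := S1 u₁ i₁ y₁ hzu₁ a₁ a₁1 c₁ d₁ eC₁ f₁ g₁ h₁ i₁ne
        have hS2' := S2 u₀ i₀ y₀ u₂ k y₂ hzu₀ a₀ a₀1 c₀ d₀ eC₀ f₀ g₀ h₀ i₀ne
          hzu₂ a₂ a₂1 c₂ d₂ eC₂ f₂ g₂ h₂r i₂ne (fun h => hk0 h.symm)
        rcases hS2' (i₁ + 1) hW11.2 with h3 | h3 | h3 | h3
        · exact e3 (by linear_combination h3 + h2 - h')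
        · exact hne01 (by linear_combination -h3)
        · exact e2 (by linear_combination h3 + h2)
        · exact e1 (by linear_combination h3 + h2)
      · exact hk1 (by linear_combination h2)
    · exact hk1 h'
    · rcases hS2 (k + 1) hWk.2 with h2 | h2 | h2 | h2
      · have hW00 := S1 u₀ i₀ y₀ hzu₀ a₀ a₀1 c₀ d₀ eC₀ f₀ g₀ h₀ i₀ne
        have hS2' := S2 u₁ i₁ y₁ u₂ k y₂ hzu₁ a₁ a₁1 c₁ d₁ eC₁ f₁ g₁ h₁ i₁ne
          hzu₂ a₂ a₂1 c₂ d₂ eC₂ f₂ g₂ h₂r i₂ne (fun h => hk1 h.symm)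
        rcases hS2' (i₀ + 1) hW00.2 with h3 | h3 | h3 | h3
        · exact e3 (by linear_combination h3 + h2 - h')
        · exact hne01 (by linear_combination h3)
        · exact e2 (by linear_combination h3 + h2)
        · exact e1 (by linear_combination h3 + h2)
      · exact hk0 (by linear_combination h2)
      · exact e2 (by linear_combination h2 - h')
      · exact e1 (by linear_combination h2 - h')
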